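/- With H, C_q, C_q^Lsh as above: for all x, y ∈ C_q^Lsh, the commutator satisfies [x,y] ∈ (q−1)·C_q^Lsh. (Equivalently: δ_n([x,y]) ∈ (q−1)^{n+1} H^{⊗(n−1)} ⊗ C_q for all n ≥ 1.) -/

import Mathlib

/- STATEMENT 13: for a left coideal subalgebra C_q of a torsion-free Hopf algebra H over
   ℂ[q,q⁻¹], the Drinfeld-type transform C_q^Lsh satisfies [x,y] ∈ (q−1)·C_q^Lsh for all
   x, y ∈ C_q^Lsh (i.e. C_q^Lsh is a *proper* quantization). -/

open scoped TensorProduct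
open PiTensorProduct

set_option maxHeartbeats 1000000
set_option synthInstance.maxHeartbeats 400000
set_option linter.unusedSectionVars false
set_option linter.unusedVariables false


namespace GQDP

/-- The ground ring `ℂ[q,q⁻¹]` of complex Laurent polynomials. -/
abbrev R : Type := LaurentPolynomial ℂ

/-- The indeterminate `q`. -/
noncomputable def q : R := LaurentPolynomial.T 1

variable (H : Type*) [Ring H] [HopfAlgebra R H] [NoZeroSMulDivisors R H]

/-- The `n`-fold tensor power `H^{⊗n}`. -/
abbrev TP (n : ℕ) := ⨂[R] (_ : Fin n), H

/-- The "tensor product" of two `R`-submodules of `H` inside `H ⊗[R] H`. -/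
noncomputable def tsub (A B : Submodule R H) : Submodule R (H ⊗[R] H) :=
  Submodule.span R {z | ∃ a ∈ A, ∃ b ∈ B, z = a ⊗ₜ[R] b}

/-- The "tensor product" of a family of submodules `p i ⊆ H` inside `H^{⊗n}`: the additive
    subgroup generated by the pure tensors with `i`-th entry in `p i` (for `n ≥ 1` this
    coincides with the `R`-span of such pure tensors). -/
noncomputable def tgrp {n : ℕ} (p : Fin n → Submodule R H) : AddSubgroup (TP H n) :=
  AddSubgroup.closure {z | ∃ f : Fin n → H, (∀ i, f i ∈ p i) ∧ z = PiTensorProduct.tprod R f}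

/-- The canonical map `H ⊗ H^{⊗n} → H^{⊗(n+1)}`. -/
noncomputable def step (n : ℕ) : (H ⊗[R] TP H n) →ₗ[R] TP H (n + 1) :=
  ((PiTensorProduct.reindex R (fun _ : Fin 1 ⊕ Fin n => H)
      (finSumFinEquiv.trans (finCongr (Nat.add_comm 1 n)))).toLinearMap
    ∘ₗ (PiTensorProduct.tmulEquiv (ι := Fin 1) (ι₂ := Fin n) R H).toLinearMap)
    ∘ₗ (LinearMap.rTensor (TP H n)
      (PiTensorProduct.subsingletonEquiv (0 : Fin 1) : (⨂[R] (_ : Fin 1), H) ≃ₗ[R] H).symm.toLinearMap)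

/-- The iterated coproduct `Δⁿ : H → H^{⊗n}`, with `Δ⁰ := ε` and `Δ^{n+1} := (id ⊗ Δⁿ) ∘ Δ`. -/
noncomputable def DeltaIter : (n : ℕ) → H →ₗ[R] TP H n
  | 0 => (PiTensorProduct.isEmptyEquiv (ι := Fin 0)).symm.toLinearMap
          ∘ₗ (Coalgebra.counit : H →ₗ[R] R)
  | n + 1 => step H n ∘ₗ LinearMap.lTensor H (DeltaIter n)
              ∘ₗ (Coalgebra.comul : H →ₗ[R] H ⊗[R] H)

/-- `δ_n := (id − η∘ε)^{⊗n} ∘ Δⁿ : H → H^{⊗n}`. -/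
noncomputable def deltaN (n : ℕ) : H →ₗ[R] TP H n :=
  (PiTensorProduct.map fun _ =>
      (LinearMap.id : H →ₗ[R] H) - Algebra.linearMap R H ∘ₗ (Coalgebra.counit : H →ₗ[R] R))
    ∘ₗ DeltaIter H n

/-- Drinfeld's subalgebra `H' = { a ∈ H | δ_n(a) ∈ (q−1)ⁿ H^{⊗n} for all n }`. -/
noncomputable def Hprime : Set H :=
  {a | ∀ n : ℕ, ∃ y : TP H n, deltaN H n a = ((q - 1) ^ n) • y}

/-- The Drinfeld-type transform `C^Lsh := { x ∈ C | δ_n(x) ∈ (q−1)ⁿ H^{⊗(n−1)} ⊗ C, ∀ n ≥ 1 }`. -/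
noncomputable def Lsh (C : Submodule R H) : Set H :=
  {x | x ∈ C ∧ ∀ n : ℕ,
    ∃ y ∈ tgrp H (fun i : Fin (n + 1) => if i = Fin.last n then C else ⊤),
      deltaN H (n + 1) x = ((q - 1) ^ (n + 1)) • y}

/-! ### basic maps -/

/-- `π := id - η∘ε`. -/
noncomputable def pr : H →ₗ[R] H :=
  (LinearMap.id : H →ₗ[R] H) - Algebra.linearMap R H ∘ₗ (Coalgebra.counit : H →ₗ[R] R)

/-- `η∘ε`. -/
noncomputable def un : H →ₗ[R] H :=
  Algebra.linearMap R H ∘ₗ (Coalgebra.counit : H →ₗ[R] R)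

lemma pr_apply (a : H) : pr H a = a - Coalgebra.counit (R := R) a • 1 := by
  simp [pr, Algebra.algebraMap_eq_smul_one]

lemma un_apply (a : H) : un H a = Coalgebra.counit (R := R) a • 1 := by
  simp [un, Algebra.algebraMap_eq_smul_one]

lemma pr_add_un (a : H) : pr H a + un H a = a := by
  simp [pr_apply, un_apply]

lemma pr_one : pr H 1 = 0 := by
  simp [pr_apply, Bialgebra.counit_one]

lemma un_one : un H 1 = 1 := by
  simp [un_apply, Bialgebra.counit_one]

theorem step_tmul (n : ℕ) (h : H) (f : Fin n → H) :
    step H n (h ⊗ₜ[R] PiTensorProduct.tprod R f) = PiTensorProduct.tprod R (Fin.cons h f) := by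
  have h1 : (PiTensorProduct.subsingletonEquiv (0 : Fin 1) :
      (⨂[R] (_ : Fin 1), H) ≃ₗ[R] H).symm h = PiTensorProduct.tprod R (fun _ : Fin 1 => h) := by
    rw [LinearEquiv.symm_apply_eq, subsingletonEquiv_apply_tprod]
  simp only [step, LinearMap.coe_comp, Function.comp_apply, LinearMap.rTensor_tmul,
    LinearEquiv.coe_toLinearMap, h1]
  rw [PiTensorProduct.tmulEquiv_apply, reindex_tprod]
  congr 1
  funext i
  obtain ⟨s, rfl⟩ : ∃ s, (finSumFinEquiv.trans (finCongr (Nat.add_comm 1 n))) s = i :=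
    ⟨_, Equiv.apply_symm_apply _ i⟩
  rw [Equiv.symm_apply_apply]
  rcases s with x | k
  · have hx : x = 0 := Subsingleton.elim _ _
    subst hx
    have : (finSumFinEquiv.trans (finCongr (Nat.add_comm 1 n))) (Sum.inl (0 : Fin 1)) =
        (0 : Fin (n+1)) := by ext; simp
    rw [this]; simp
  · have : (finSumFinEquiv.trans (finCongr (Nat.add_comm 1 n))) (Sum.inr k) = Fin.succ k := by
      ext; simp [Nat.add_comm]
    rw [this]; simp

lemma tprod_update_smul {n : ℕ} (f : Fin n → H) (j : Fin n) (r : R) :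
    PiTensorProduct.tprod R (Function.update f j (r • f j)) = r • PiTensorProduct.tprod R f := by
  rw [MultilinearMap.map_update_smul]
  congr 1
  exact congrArg ⇑(PiTensorProduct.tprod R (s := fun _ => H)) (Function.update_eq_self j f)

/-! ### multiplicativity -/

lemma one_tp (n : ℕ) : (1 : TP H n) = PiTensorProduct.tprod R (fun _ => 1) := rfl

lemma step_mul (n : ℕ) (u v : H ⊗[R] TP H n) :
    step H n (u * v) = step H n u * step H n v := by
  induction u using TensorProduct.induction_on with
  | zero => simp
  | add u₁ u₂ h₁ h₂ => simp [add_mul, h₁, h₂]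
  | tmul a s =>
    induction v using TensorProduct.induction_on with
    | zero => simp
    | add v₁ v₂ h₁ h₂ => simp [mul_add, h₁, h₂]
    | tmul c t =>
      rw [Algebra.TensorProduct.tmul_mul_tmul]
      induction s using PiTensorProduct.induction_on with
      | smul_tprod r f =>
        induction t using PiTensorProduct.induction_on with
        | smul_tprod r' g =>
          have : (r • PiTensorProduct.tprod R f) * (r' • PiTensorProduct.tprod R g) = (r * r') • (PiTensorProduct.tprod R (f * g)) := by
            rw [smul_mul_smul_comm, tprod_mul_tprod]
          rw [TensorProduct.tmul_smul, TensorProduct.tmul_smul, this, TensorProduct.tmul_smul,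
            map_smul, map_smul, map_smul, smul_mul_smul_comm, step_tmul, step_tmul, step_tmul,
            tprod_mul_tprod]
          congr 2
          funext j
          refine Fin.cases ?_ (fun k => ?_) j <;> simp
        | add t₁ t₂ h₁ h₂ =>
          rw [mul_add, TensorProduct.tmul_add, TensorProduct.tmul_add, map_add, map_add, h₁, h₂,
            mul_add]
      | add s₁ s₂ h₁ h₂ =>
        rw [add_mul, TensorProduct.tmul_add, TensorProduct.tmul_add, map_add, map_add, h₁, h₂,
          add_mul]

lemma Delta_mul (n : ℕ) (a b : H) :
    DeltaIter H n (a * b) = DeltaIter H n a * DeltaIter H n b := by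
  induction n generalizing a b with
  | zero =>
    have hsymm : ∀ r : R, (PiTensorProduct.isEmptyEquiv (ι := Fin 0) (s := fun _ => H)).symm r
        = r • PiTensorProduct.tprod R (fun i : Fin 0 => (isEmptyElim i : H)) := fun r => rfl
    simp only [DeltaIter, LinearMap.coe_comp, Function.comp_apply, LinearEquiv.coe_toLinearMap,
      hsymm, Bialgebra.counit_mul]
    rw [smul_mul_smul_comm, tprod_mul_tprod]
    congr 1
    exact congrArg ⇑(PiTensorProduct.tprod R (s := fun _ => H)) (funext (fun i => isEmptyElim i))
  | succ n ih =>
    have hl : ∀ u v : H ⊗[R] H,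
        LinearMap.lTensor H (DeltaIter H n) (u * v) =
          LinearMap.lTensor H (DeltaIter H n) u * LinearMap.lTensor H (DeltaIter H n) v := by
      intro u v
      induction u using TensorProduct.induction_on with
      | zero => simp
      | add u₁ u₂ h₁ h₂ => simp [add_mul, h₁, h₂]
      | tmul a' b' =>
        induction v using TensorProduct.induction_on with
        | zero => simp
        | add v₁ v₂ h₁ h₂ => simp [mul_add, h₁, h₂]
        | tmul c' d' =>
          rw [Algebra.TensorProduct.tmul_mul_tmul, LinearMap.lTensor_tmul, LinearMap.lTensor_tmul,
            LinearMap.lTensor_tmul, Algebra.TensorProduct.tmul_mul_tmul, ih]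
    simp only [DeltaIter, LinearMap.coe_comp, Function.comp_apply, Bialgebra.comul_mul]
    rw [hl, step_mul]

lemma Delta_one (n : ℕ) : DeltaIter H n 1 = 1 := by
  induction n with
  | zero =>
    have hsymm : ∀ r : R, (PiTensorProduct.isEmptyEquiv (ι := Fin 0) (s := fun _ => H)).symm r
        = r • PiTensorProduct.tprod R (fun i : Fin 0 => (isEmptyElim i : H)) := fun r => rfl
    simp only [DeltaIter, LinearMap.coe_comp, Function.comp_apply, LinearEquiv.coe_toLinearMap,
      hsymm, Bialgebra.counit_one, one_smul, one_tp]
    exact congrArg ⇑(PiTensorProduct.tprod R (s := fun _ => H)) (funext (fun i => isEmptyElim i))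
  | succ n ih =>
    simp only [DeltaIter, LinearMap.coe_comp, Function.comp_apply, Bialgebra.comul_one,
      Algebra.TensorProduct.one_def, LinearMap.lTensor_tmul, ih, one_tp, step_tmul]
    congr 1
    funext j
    refine Fin.cases ?_ (fun k => ?_) j <;> simp



/-! ### the projections `mapP S` -/

noncomputable def mapP {n : ℕ} (S : Finset (Fin n)) : TP H n →ₗ[R] TP H n :=
  PiTensorProduct.map (fun i => if i ∈ S then pr H else un H)

noncomputable def mapPr (n : ℕ) : TP H n →ₗ[R] TP H n :=
  PiTensorProduct.map (fun _ => pr H)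

lemma mapP_univ (n : ℕ) : mapP H (Finset.univ : Finset (Fin n)) = mapPr H n := by
  unfold mapP mapPr
  congr 1
  funext i
  simp

lemma deltaN_eq (n : ℕ) (a : H) : deltaN H n a = mapPr H n (DeltaIter H n a) := rfl

lemma decomp {n : ℕ} (v : TP H n) : ∑ S : Finset (Fin n), mapP H S v = v := by
  have : (∑ S : Finset (Fin n), mapP H S) = LinearMap.id := by
    refine LinearMap.ext fun w => ?_
    induction w using PiTensorProduct.induction_on with
    | smul_tprod r f =>
      rw [map_smul, LinearMap.id_apply]
      congr 1
      rw [LinearMap.sum_apply]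
      have hf : PiTensorProduct.tprod R f = PiTensorProduct.tprod R ((fun i => pr H (f i)) + fun i => un H (f i)) := by
        congr 1
        funext i
        rw [Pi.add_apply, pr_add_un]
      conv_rhs => rw [hf,
        MultilinearMap.map_add_univ (PiTensorProduct.tprod R) (fun i => pr H (f i))
          (fun i => un H (f i))]
      refine Finset.sum_congr rfl fun S _ => ?_
      rw [mapP, map_tprod]
      congr 1
      funext i
      by_cases hi : i ∈ S <;> simp [hi, Finset.piecewise, apply_ite]
    | add v₁ v₂ h₁ h₂ => rw [map_add, h₁, h₂, LinearMap.id_apply, LinearMap.id_apply,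
        LinearMap.id_apply]
  calc ∑ S : Finset (Fin n), mapP H S v = (∑ S : Finset (Fin n), mapP H S) v := by
        rw [LinearMap.sum_apply]
    _ = v := by rw [this, LinearMap.id_apply]

/-! ### insertion maps -/

noncomputable def Ins {n : ℕ} (i : Fin (n + 1)) : TP H n →ₗ[R] TP H (n + 1) :=
  (PiTensorProduct.reindex R (fun _ : Fin (n + 1) => H)
      ((finSuccEquiv n).trans (finSuccEquiv' i).symm)).toLinearMap
    ∘ₗ step H n ∘ₗ (TensorProduct.mk R H (TP H n) 1)

lemma Ins_tprod {n : ℕ} (i : Fin (n + 1)) (f : Fin n → H) :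
    Ins H i (PiTensorProduct.tprod R f) = PiTensorProduct.tprod R (Fin.insertNth i 1 f) := by
  simp only [Ins, LinearMap.coe_comp, Function.comp_apply, TensorProduct.mk_apply,
    LinearEquiv.coe_toLinearMap, step_tmul, reindex_tprod]
  congr 1
  funext j
  refine Fin.succAboveCases i ?_ (fun k => ?_) j
  · have : ((finSuccEquiv n).trans (finSuccEquiv' i).symm).symm i = 0 := by
      simp [Equiv.symm_apply_eq]
    rw [this, Fin.insertNth_apply_same, Fin.cons_zero]
  · have : ((finSuccEquiv n).trans (finSuccEquiv' i).symm).symm (i.succAbove k) = k.succ := by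
      simp [Equiv.symm_apply_eq]
    rw [this, Fin.insertNth_apply_succAbove, Fin.cons_succ]

lemma map_step {n : ℕ} (h : Fin (n + 1) → (H →ₗ[R] H)) (u : H ⊗[R] TP H n) :
    PiTensorProduct.map h (step H n u) =
      step H n ((TensorProduct.map (h 0) (PiTensorProduct.map (fun k => h k.succ))) u) := by
  induction u using TensorProduct.induction_on with
  | zero => simp
  | add u₁ u₂ h₁ h₂ => simp only [map_add, h₁, h₂]
  | tmul a s =>
    induction s using PiTensorProduct.induction_on with
    | smul_tprod r f =>
      rw [TensorProduct.tmul_smul, map_smul, map_smul, map_smul, map_smul]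
      congr 1
      rw [step_tmul, map_tprod, TensorProduct.map_tmul, map_tprod, step_tmul]
      congr 1
      funext j
      refine Fin.cases ?_ (fun k => ?_) j <;> simp
    | add s₁ s₂ h₁ h₂ =>
      rw [TensorProduct.tmul_add, map_add, map_add, h₁, h₂, map_add, map_add]

lemma Ins_zero_eq {n : ℕ} (v : TP H n) : Ins H 0 v = step H n (1 ⊗ₜ[R] v) := by
  induction v using PiTensorProduct.induction_on with
  | smul_tprod r f =>
    rw [map_smul, Ins_tprod, TensorProduct.tmul_smul, map_smul, step_tmul]
    congr 1
    exact congrArg ⇑(PiTensorProduct.tprod R (s := fun _ => H)) (Fin.insertNth_zero' 1 f)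
  | add v₁ v₂ h₁ h₂ => rw [map_add, h₁, h₂, ← map_add, ← TensorProduct.tmul_add]

lemma step_Ins {n : ℕ} (k : Fin (n + 1)) (u : H ⊗[R] TP H n) :
    step H (n + 1) (LinearMap.lTensor H (Ins H k) u) = Ins H k.succ (step H n u) := by
  induction u using TensorProduct.induction_on with
  | zero => simp
  | add u₁ u₂ h₁ h₂ => simp only [map_add, h₁, h₂]
  | tmul a s =>
    induction s using PiTensorProduct.induction_on with
    | smul_tprod r f =>
      rw [TensorProduct.tmul_smul, map_smul, map_smul, map_smul, map_smul]
      congr 1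
      rw [LinearMap.lTensor_tmul, Ins_tprod, step_tmul, step_tmul, Ins_tprod]
      congr 1
      funext j
      refine Fin.cases ?_ (fun m => ?_) j
      · rw [Fin.cons_zero]
        have : (0 : Fin (n + 2)) = (k.succ).succAbove 0 := (Fin.succ_succAbove_zero k).symm
        rw [this, Fin.insertNth_apply_succAbove, Fin.cons_zero]
      · refine Fin.succAboveCases k ?_ (fun l => ?_) m
        · rw [Fin.cons_succ, Fin.insertNth_apply_same, Fin.insertNth_apply_same]
        · rw [Fin.cons_succ, Fin.insertNth_apply_succAbove, ← Fin.succ_succAbove_succ,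
            Fin.insertNth_apply_succAbove, Fin.cons_succ]
    | add s₁ s₂ h₁ h₂ =>
      simp only [TensorProduct.tmul_add, map_add, h₁, h₂]


lemma Delta_succ (n : ℕ) (a : H) :
    DeltaIter H (n + 1) a =
      step H n (LinearMap.lTensor H (DeltaIter H n)
        ((Coalgebra.comul : H →ₗ[R] H ⊗[R] H) a)) := rfl

lemma collapse0 (n : ℕ) (a : H) :
    PiTensorProduct.map (fun j => if j = (0 : Fin (n + 1)) then un H else LinearMap.id)
        (DeltaIter H (n + 1) a) = Ins H 0 (DeltaIter H n a) := by
  rw [Delta_succ, map_step]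
  have h0 : (if (0 : Fin (n + 1)) = 0 then un H else (LinearMap.id : H →ₗ[R] H)) = un H :=
    if_pos rfl
  have hsucc : (PiTensorProduct.map (fun k : Fin n =>
      if k.succ = (0 : Fin (n + 1)) then un H else LinearMap.id)) =
      (LinearMap.id : TP H n →ₗ[R] TP H n) := by
    have : (fun k : Fin n => if k.succ = (0 : Fin (n + 1)) then un H else LinearMap.id) =
        fun _ : Fin n => (LinearMap.id : H →ₗ[R] H) := by
      funext k
      simp [Fin.succ_ne_zero]
    rw [this, PiTensorProduct.map_id]
  rw [h0, hsucc]
  have key : (TensorProduct.map (un H) (LinearMap.id : TP H n →ₗ[R] TP H n))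
      (LinearMap.lTensor H (DeltaIter H n) ((Coalgebra.comul : H →ₗ[R] H ⊗[R] H) a)) =
      1 ⊗ₜ[R] DeltaIter H n a := by
    have h1 : ∀ u : H ⊗[R] H,
        (TensorProduct.map (un H) (LinearMap.id : TP H n →ₗ[R] TP H n))
          (LinearMap.lTensor H (DeltaIter H n) u) =
          LinearMap.lTensor H (DeltaIter H n)
            ((TensorProduct.map (un H) (LinearMap.id : H →ₗ[R] H)) u) := by
      intro u
      induction u using TensorProduct.induction_on with
      | zero => simp
      | add u₁ u₂ hu₁ hu₂ => simp only [map_add, hu₁, hu₂]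
      | tmul c d => simp
    rw [h1]
    have h2 : (TensorProduct.map (un H) (LinearMap.id : H →ₗ[R] H))
        ((Coalgebra.comul : H →ₗ[R] H ⊗[R] H) a) = 1 ⊗ₜ[R] a := by
      have : TensorProduct.map (un H) (LinearMap.id : H →ₗ[R] H) =
          (LinearMap.rTensor H (Algebra.linearMap R H)) ∘ₗ
            (LinearMap.rTensor H (Coalgebra.counit : H →ₗ[R] R)) := by
        rw [← LinearMap.rTensor_comp]
        rfl
      rw [this, LinearMap.comp_apply]
      have hc : (LinearMap.rTensor H (Coalgebra.counit : H →ₗ[R] R))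
          ((Coalgebra.comul : H →ₗ[R] H ⊗[R] H) a) = (1 : R) ⊗ₜ[R] a :=
        Coalgebra.rTensor_counit_comul a
      rw [hc, LinearMap.rTensor_tmul]
      simp
    rw [h2, LinearMap.lTensor_tmul]
  rw [key, Ins_zero_eq]

lemma collapse (n : ℕ) (i : Fin (n + 1)) (a : H) :
    PiTensorProduct.map (fun j => if j = i then un H else LinearMap.id)
        (DeltaIter H (n + 1) a) = Ins H i (DeltaIter H n a) := by
  induction n generalizing a with
  | zero =>
    have hi : i = 0 := Fin.eq_zero i
    subst hi
    exact collapse0 H 0 a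
  | succ n ih =>
    refine Fin.cases ?_ (fun k => ?_) i
    · exact collapse0 H (n + 1) a
    · rw [Delta_succ, map_step]
      have h0 : (if (0 : Fin (n + 2)) = Fin.succ k then un H else (LinearMap.id : H →ₗ[R] H))
          = LinearMap.id := if_neg (Fin.succ_ne_zero k).symm
      have hfam : (fun m : Fin (n + 1) => if m.succ = Fin.succ k then un H else LinearMap.id) =
          (fun m : Fin (n + 1) => if m = k then un H else LinearMap.id) := by
        funext m
        simp [Fin.succ_inj]
      rw [h0, hfam]
      have h2 : ∀ u : H ⊗[R] H,
          (TensorProduct.map (LinearMap.id : H →ₗ[R] H)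
            (PiTensorProduct.map (fun m : Fin (n + 1) => if m = k then un H else LinearMap.id)))
            (LinearMap.lTensor H (DeltaIter H (n + 1)) u) =
            LinearMap.lTensor H (Ins H k) (LinearMap.lTensor H (DeltaIter H n) u) := by
        intro u
        induction u using TensorProduct.induction_on with
        | zero => simp
        | add u₁ u₂ hu₁ hu₂ => simp only [map_add, hu₁, hu₂]
        | tmul c d =>
          rw [LinearMap.lTensor_tmul, TensorProduct.map_tmul, LinearMap.id_apply, ih,
            LinearMap.lTensor_tmul, LinearMap.lTensor_tmul]
      rw [h2, step_Ins]
      rfl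


/-! ### the submodules `W C S` -/

noncomputable def W (C : Subalgebra R H) {n : ℕ} (S : Finset (Fin n)) :
    Submodule R (TP H n) :=
  Submodule.span R {z | ∃ f : Fin n → H, (∀ i, i ∉ S → f i = 1) ∧
    (∀ i : Fin n, (i : ℕ) + 1 = n → f i ∈ C) ∧ z = PiTensorProduct.tprod R f}

lemma mem_W (C : Subalgebra R H) {n : ℕ} (S : Finset (Fin n)) (f : Fin n → H)
    (h1 : ∀ i, i ∉ S → f i = 1) (h2 : ∀ i : Fin n, (i : ℕ) + 1 = n → f i ∈ C) :
    PiTensorProduct.tprod R f ∈ W H C S :=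
  Submodule.subset_span ⟨f, h1, h2, rfl⟩

lemma W_mul (C : Subalgebra R H) {n : ℕ} {S T : Finset (Fin n)} {u v : TP H n}
    (hu : u ∈ W H C S) (hv : v ∈ W H C T) : u * v ∈ W H C (S ∪ T) := by
  induction hu using Submodule.span_induction generalizing v with
  | mem u hugen =>
    induction hv using Submodule.span_induction with
    | mem v hvgen =>
      obtain ⟨f, hf1, hf2, rfl⟩ := hugen
      obtain ⟨g, hg1, hg2, rfl⟩ := hvgen
      rw [tprod_mul_tprod]
      refine mem_W H C _ _ (fun i hi => ?_) (fun i hi => ?_)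
      · rw [Finset.mem_union, not_or] at hi
        rw [Pi.mul_apply, hf1 i hi.1, hg1 i hi.2, one_mul]
      · exact mul_mem (hf2 i hi) (hg2 i hi)
    | zero => rw [mul_zero]; exact zero_mem _
    | add v₁ v₂ _ _ h₁ h₂ => rw [mul_add]; exact add_mem h₁ h₂
    | smul r v _ h => rw [mul_smul_comm]; exact Submodule.smul_mem _ _ h
  | zero => rw [zero_mul]; exact zero_mem _
  | add u₁ u₂ _ _ h₁ h₂ => rw [add_mul]; exact add_mem (h₁ hv) (h₂ hv)
  | smul r u _ h => rw [smul_mul_assoc]; exact Submodule.smul_mem _ _ (h hv)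

lemma W_comm (C : Subalgebra R H) {n : ℕ} {S T : Finset (Fin n)} (hST : Disjoint S T)
    {u v : TP H n} (hu : u ∈ W H C S) (hv : v ∈ W H C T) : u * v = v * u := by
  induction hu using Submodule.span_induction generalizing v with
  | mem u hugen =>
    induction hv using Submodule.span_induction with
    | mem v hvgen =>
      obtain ⟨f, hf1, hf2, rfl⟩ := hugen
      obtain ⟨g, hg1, hg2, rfl⟩ := hvgen
      rw [tprod_mul_tprod, tprod_mul_tprod]
      congr 1
      funext i
      rw [Pi.mul_apply, Pi.mul_apply]
      by_cases hiS : i ∈ S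
      · have hiT : i ∉ T := fun h => (Finset.disjoint_left.mp hST) hiS h
        rw [hg1 i hiT, one_mul, mul_one]
      · rw [hf1 i hiS, one_mul, mul_one]
    | zero => rw [mul_zero, zero_mul]
    | add v₁ v₂ _ _ h₁ h₂ => rw [mul_add, add_mul, h₁, h₂]
    | smul r v _ h => rw [mul_smul_comm, smul_mul_assoc, h]
  | zero => rw [zero_mul, mul_zero]
  | add u₁ u₂ _ _ h₁ h₂ => rw [add_mul, mul_add, h₁ hv, h₂ hv]
  | smul r u _ h => rw [smul_mul_assoc, mul_smul_comm, h hv]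

lemma pr_mem (C : Subalgebra R H) {a : H} (ha : a ∈ C) : pr H a ∈ C := by
  rw [pr_apply]
  exact C.sub_mem ha (C.smul_mem C.one_mem _)

lemma mapPr_W (C : Subalgebra R H) {n : ℕ} {S : Finset (Fin n)} {u : TP H n}
    (hu : u ∈ W H C S) : mapPr H n u ∈ W H C Finset.univ := by
  induction hu using Submodule.span_induction with
  | mem u hugen =>
    obtain ⟨f, hf1, hf2, rfl⟩ := hugen
    rw [mapPr, map_tprod]
    exact mem_W H C _ _ (fun i hi => absurd (Finset.mem_univ i) hi)
      (fun i hi => pr_mem H C (hf2 i hi))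
  | zero => rw [map_zero]; exact zero_mem _
  | add u₁ u₂ _ _ h₁ h₂ => rw [map_add]; exact add_mem h₁ h₂
  | smul r u _ h => rw [map_smul]; exact Submodule.smul_mem _ _ h

lemma mapPr_W_zero (C : Subalgebra R H) {n : ℕ} {S : Finset (Fin n)} {u : TP H n}
    (hu : u ∈ W H C S) (hS : S ≠ Finset.univ) : mapPr H n u = 0 := by
  obtain ⟨i, hi⟩ : ∃ i, i ∉ S := by
    by_contra h
    push_neg at h
    exact hS (Finset.eq_univ_iff_forall.mpr h)
  induction hu using Submodule.span_induction with
  | mem u hugen =>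
    obtain ⟨f, hf1, hf2, rfl⟩ := hugen
    rw [mapPr, map_tprod]
    refine MultilinearMap.map_coord_zero _ i ?_
    rw [hf1 i hi, pr_one]
  | zero => rw [map_zero]
  | add u₁ u₂ _ _ h₁ h₂ => rw [map_add, h₁, h₂, add_zero]
  | smul r u _ h => rw [map_smul, h, smul_zero]

/-! ### relation between `W` and `tgrp` -/

lemma tgrp_smul (C : Subalgebra R H) {n : ℕ} (r : R) {v : TP H (n + 1)}
    (hv : v ∈ tgrp H (fun i : Fin (n + 1) => if i = Fin.last n then C.toSubmodule else ⊤)) :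
    r • v ∈ tgrp H (fun i : Fin (n + 1) => if i = Fin.last n then C.toSubmodule else ⊤) := by
  induction hv using AddSubgroup.closure_induction with
  | mem z hz =>
    obtain ⟨f, hf, rfl⟩ := hz
    rw [← tprod_update_smul]
    refine AddSubgroup.subset_closure ⟨_, fun i => ?_, rfl⟩
    rcases eq_or_ne i (Fin.last n) with hi | hi
    · subst hi
      rw [Function.update_self]
      have := hf (Fin.last n)
      simp only [if_pos rfl] at this ⊢
      exact Submodule.smul_mem _ _ this
    · rw [Function.update_of_ne hi]
      exact hf i
  | zero => rw [smul_zero]; exact zero_mem _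
  | add x y _ _ hx hy => rw [smul_add]; exact add_mem hx hy
  | neg x _ hx => rw [smul_neg]; exact neg_mem hx

lemma W_univ_le_tgrp (C : Subalgebra R H) {n : ℕ} {v : TP H (n + 1)}
    (hv : v ∈ W H C (Finset.univ : Finset (Fin (n + 1)))) :
    v ∈ tgrp H (fun i : Fin (n + 1) => if i = Fin.last n then C.toSubmodule else ⊤) := by
  induction hv using Submodule.span_induction with
  | mem z hz =>
    obtain ⟨f, _, hf2, rfl⟩ := hz
    refine AddSubgroup.subset_closure ⟨f, fun i => ?_, rfl⟩
    rcases eq_or_ne i (Fin.last n) with hi | hi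
    · subst hi
      simp only [if_pos rfl]
      exact hf2 _ (by rw [Fin.val_last])
    · simp only [if_neg hi]
      exact Submodule.mem_top
  | zero => exact zero_mem _
  | add u₁ u₂ _ _ h₁ h₂ => exact add_mem h₁ h₂
  | smul r u _ h => exact tgrp_smul H C r h

lemma tgrp_le_W_univ (C : Subalgebra R H) {n : ℕ} {y : TP H (n + 1)}
    (hy : y ∈ tgrp H (fun i : Fin (n + 1) => if i = Fin.last n then C.toSubmodule else ⊤)) :
    y ∈ W H C (Finset.univ : Finset (Fin (n + 1))) := by
  induction hy using AddSubgroup.closure_induction with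
  | mem z hz =>
    obtain ⟨f, hf, rfl⟩ := hz
    refine mem_W H C _ _ (fun i hi => absurd (Finset.mem_univ i) hi) (fun i hi => ?_)
    have hlast : i = Fin.last n := by
      ext
      rw [Fin.val_last]
      omega
    have := hf i
    rw [hlast] at this ⊢
    simp only [if_pos rfl] at this
    exact this
  | zero => exact zero_mem _
  | add x y _ _ hx hy => exact add_mem hx hy
  | neg x _ hx => exact neg_mem hx

lemma W_zero (C : Subalgebra R H) (S : Finset (Fin 0)) (v : TP H 0) : v ∈ W H C S := by
  induction v using PiTensorProduct.induction_on with
  | smul_tprod r f =>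
    exact Submodule.smul_mem _ _
      (mem_W H C S f (fun i _ => isEmptyElim i) (fun i _ => isEmptyElim i))
  | add v₁ v₂ h₁ h₂ => exact add_mem h₁ h₂

lemma Ins_W (C : Subalgebra R H) {n : ℕ} (i : Fin (n + 1)) (S : Finset (Fin (n + 1)))
    (hi : i ∉ S) {w : TP H n}
    (hw : w ∈ W H C (S.preimage i.succAbove Fin.succAbove_right_injective.injOn)) :
    Ins H i w ∈ W H C S := by
  induction hw using Submodule.span_induction with
  | mem z hz =>
    obtain ⟨f, hf1, hf2, rfl⟩ := hz
    rw [Ins_tprod]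
    refine mem_W H C _ _ (fun j hj => ?_) (fun j hj => ?_)
    · rcases eq_or_ne j i with hji | hji
      · subst hji
        exact Fin.insertNth_apply_same (α := fun _ => H) j 1 f
      · obtain ⟨k, rfl⟩ := Fin.exists_succAbove_eq hji
        rw [Fin.insertNth_apply_succAbove]
        exact hf1 k (fun hk => hj (Finset.mem_preimage.mp hk))
    · rcases eq_or_ne j i with hji | hji
      · subst hji
        rw [Fin.insertNth_apply_same]
        exact C.one_mem
      · obtain ⟨k, rfl⟩ := Fin.exists_succAbove_eq hji
        rw [Fin.insertNth_apply_succAbove]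
        refine hf2 k ?_
        rcases lt_or_ge (Fin.castSucc k) i with hlt | hle
        · rw [Fin.succAbove_of_castSucc_lt _ _ hlt] at hj
          have : (k : ℕ) < n := k.isLt
          simp only [Fin.coe_castSucc] at hj
          omega
        · rw [Fin.succAbove_of_le_castSucc _ _ hle] at hj
          simp only [Fin.val_succ] at hj
          omega
  | zero => rw [map_zero]; exact zero_mem _
  | add u₁ u₂ _ _ h₁ h₂ => rw [map_add]; exact add_mem h₁ h₂
  | smul r u _ h => rw [map_smul]; exact Submodule.smul_mem _ _ h

lemma map_Ins {n : ℕ} (h : Fin (n + 1) → (H →ₗ[R] H)) (i : Fin (n + 1))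
    (hh : h i = LinearMap.id) (u : TP H n) :
    PiTensorProduct.map h (Ins H i u) =
      Ins H i (PiTensorProduct.map (fun k => h (i.succAbove k)) u) := by
  induction u using PiTensorProduct.induction_on with
  | smul_tprod r f =>
    simp only [map_smul, Ins_tprod, map_tprod]
    congr 2
    funext j
    refine Fin.succAboveCases i ?_ (fun k => ?_) j
    · rw [Fin.insertNth_apply_same, Fin.insertNth_apply_same, hh, LinearMap.id_apply]
    · rw [Fin.insertNth_apply_succAbove, Fin.insertNth_apply_succAbove]
  | add v₁ v₂ h₁ h₂ => simp only [map_add, h₁, h₂]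

/-! ### the key divisibility lemma -/

theorem Qlem (C : Subalgebra R H) {x : H} (hx : x ∈ Lsh H C.toSubmodule) :
    ∀ (n : ℕ) (S : Finset (Fin n)), ∃ w ∈ W H C S,
      mapP H S (DeltaIter H n x) = ((q - 1) ^ S.card) • w := by
  intro n
  induction n with
  | zero =>
    intro S
    refine ⟨mapP H S (DeltaIter H 0 x), W_zero H C S _, ?_⟩
    have : S = ∅ := Finset.eq_empty_of_isEmpty S
    subst this
    rw [Finset.card_empty, pow_zero, one_smul]
  | succ n ih =>
    intro S
    by_cases hS : S = Finset.univ
    · subst hS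
      obtain ⟨y, hy, hxy⟩ := hx.2 n
      refine ⟨y, tgrp_le_W_univ H C hy, ?_⟩
      rw [mapP_univ, ← deltaN_eq, hxy, Finset.card_univ, Fintype.card_fin]
    · obtain ⟨i, hi⟩ : ∃ i, i ∉ S := by
        by_contra h
        push_neg at h
        exact hS (Finset.eq_univ_iff_forall.mpr h)
      obtain ⟨w, hw, hEq⟩ := ih (S.preimage i.succAbove Fin.succAbove_right_injective.injOn)
      refine ⟨Ins H i w, Ins_W H C i S hi hw, ?_⟩
      -- decompose `mapP S` through the collapse at slot `i`
      have hcomp : (fun j : Fin (n + 1) => if j ∈ S then pr H else un H) =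
          (fun j : Fin (n + 1) =>
            ((fun j' : Fin (n + 1) => if j' = i then (LinearMap.id : H →ₗ[R] H)
                else (if j' ∈ S then pr H else un H)) j) ∘ₗ
            ((fun j' : Fin (n + 1) => if j' = i then un H else LinearMap.id) j)) := by
        funext j
        rcases eq_or_ne j i with hji | hji
        · subst hji
          simp [hi]
        · simp [hji]
      rw [mapP, hcomp, PiTensorProduct.map_comp, LinearMap.comp_apply, collapse,
        map_Ins _ _ i (if_pos rfl)]
      have hfam : (fun k : Fin n =>
          if i.succAbove k = i then (LinearMap.id : H →ₗ[R] H)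
            else (if i.succAbove k ∈ S then pr H else un H)) =
          (fun k : Fin n =>
            if k ∈ S.preimage i.succAbove Fin.succAbove_right_injective.injOn then pr H
              else un H) := by
        funext k
        rw [if_neg (Fin.succAbove_ne i k)]
        by_cases hk : i.succAbove k ∈ S
        · rw [if_pos hk, if_pos (Finset.mem_preimage.mpr hk)]
        · rw [if_neg hk, if_neg (fun h => hk (Finset.mem_preimage.mp h))]
      rw [hfam, ← mapP, hEq, map_smul]
      congr 2
      have himg : (S.preimage i.succAbove Fin.succAbove_right_injective.injOn).image
          i.succAbove = S := by
        ext j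
        simp only [Finset.mem_image, Finset.mem_preimage]
        constructor
        · rintro ⟨k, hk, rfl⟩
          exact hk
        · intro hj
          have hji : j ≠ i := fun e => hi (e ▸ hj)
          obtain ⟨k, rfl⟩ := Fin.exists_succAbove_eq hji
          exact ⟨k, hj, rfl⟩
      calc (S.preimage i.succAbove Fin.succAbove_right_injective.injOn).card
          = ((S.preimage i.succAbove Fin.succAbove_right_injective.injOn).image
              i.succAbove).card :=
            (Finset.card_image_of_injective _ Fin.succAbove_right_injective).symm
        _ = S.card := by rw [himg]


/-! ### arithmetic of the base ring -/

lemma q_sub_one_ne_zero : (q - 1 : R) ≠ 0 := by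
  intro h
  have hq : (q : R) = 1 := by linear_combination h
  have : (LaurentPolynomial.T 1 : R) = LaurentPolynomial.T 0 := by
    rw [LaurentPolynomial.T_zero]
    exact hq
  have h2 : (Finsupp.single (1 : ℤ) (1 : ℂ)) = Finsupp.single (0 : ℤ) (1 : ℂ) := congrArg AddMonoidAlgebra.coeff this
  have := Finsupp.single_eq_single_iff (1 : ℤ) (0 : ℤ) (1 : ℂ) (1 : ℂ) |>.mp h2
  rcases this with ⟨h, -⟩ | ⟨h, -⟩
  · exact one_ne_zero h
  · exact one_ne_zero h

instance pidR : IsPrincipalIdealRing R := by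
  haveI := LaurentPolynomial.isLocalization (R := ℂ)
  constructor
  intro I
  obtain ⟨p, hp⟩ := (IsPrincipalIdealRing.principal
    (Ideal.comap (algebraMap (Polynomial ℂ) R) I)).principal
  refine ⟨⟨algebraMap (Polynomial ℂ) R p, ?_⟩⟩
  conv_lhs => rw [← IsLocalization.map_comap (Submonoid.powers (Polynomial.X : Polynomial ℂ)) R I]
  rw [Ideal.under_def, hp, Ideal.submodule_span_eq, Ideal.map_span, Set.image_singleton,
    Ideal.submodule_span_eq]

/-! ### flatness of a torsion-free module over the PID `R` -/

theorem flat_of_tf (M : Type*) [AddCommGroup M] [Module R M] [NoZeroSMulDivisors R M] :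
    Module.Flat R M := by
  rw [Module.Flat.iff_rTensor_injective']
  intro I
  obtain ⟨a, ha⟩ := (IsPrincipalIdealRing.principal I).principal
  by_cases h0 : a = 0
  · subst h0
    have hI : ∀ z : I ⊗[R] M, z = 0 := by
      intro z
      induction z using TensorProduct.induction_on with
      | zero => rfl
      | add z₁ z₂ h₁ h₂ => rw [h₁, h₂, add_zero]
      | tmul v m =>
        have hv : (v : R) = 0 := by
          have hv0 : (v : R) ∈ Submodule.span R {(0 : R)} := by
            rw [← ha]
            exact v.2
          obtain ⟨c, hc⟩ := Submodule.mem_span_singleton.mp hv0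
          rw [← hc, smul_zero]
        have : v = 0 := Subtype.ext hv
        rw [this, TensorProduct.zero_tmul]
    intro z₁ z₂ _
    rw [hI z₁, hI z₂]
  · have haR : a ∈ I := by rw [ha]; exact Ideal.subset_span rfl
    subst ha
    set e := LinearEquiv.toSpanNonzeroSingleton R R a h0 with he
    set E := TensorProduct.congr e (LinearEquiv.refl R M) with hE
    have hsmul_inj : Function.Injective (fun z : R ⊗[R] M => a • z) := by
      intro z z' hzz
      have h1 := congrArg (TensorProduct.lid R M) hzz
      simp only [map_smul] at h1
      exact (TensorProduct.lid R M).injective (smul_right_injective M h0 h1)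
    have hcomp : ∀ z : R ⊗[R] M,
        LinearMap.rTensor M (Submodule.subtype _) (E z) = a • z := by
      intro z
      induction z using TensorProduct.induction_on with
      | zero => rw [map_zero, map_zero, smul_zero]
      | add z₁ z₂ h₁ h₂ => rw [map_add, map_add, h₁, h₂, smul_add]
      | tmul r m =>
        rw [hE, TensorProduct.congr_tmul, LinearMap.rTensor_tmul, LinearEquiv.refl_apply]
        have : (Submodule.subtype _) (e r) = r • a := by
          rw [he, LinearEquiv.toSpanNonzeroSingleton_apply]
          rfl
        rw [this, TensorProduct.smul_tmul']
        congr 1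
        rw [smul_eq_mul, smul_eq_mul, mul_comm]
    intro z₁ z₂ hz
    have h1 : a • E.symm z₁ = a • E.symm z₂ := by
      rw [← hcomp, ← hcomp, E.apply_symm_apply, E.apply_symm_apply, hz]
    have h2 := hsmul_inj h1
    exact E.symm.injective h2

theorem nzsd_tensor (M : Type*) [AddCommGroup M] [Module R M] [NoZeroSMulDivisors R M] :
    NoZeroSMulDivisors R (H ⊗[R] M) := by
  haveI : Module.Flat R H := flat_of_tf H
  constructor
  intro r z hrz
  by_cases hr : r = 0
  · exact Or.inl hr
  right
  have hminj : Function.Injective ((r • LinearMap.id : M →ₗ[R] M)) := by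
    intro m m' hm
    simp only [LinearMap.smul_apply, LinearMap.id_apply] at hm
    exact smul_right_injective M hr hm
  have hinj := Module.Flat.lTensor_preserves_injective_linearMap
    (M := H) (r • LinearMap.id : M →ₗ[R] M) hminj
  have hz : ∀ w : H ⊗[R] M, LinearMap.lTensor H (r • LinearMap.id : M →ₗ[R] M) w = r • w := by
    intro w
    induction w using TensorProduct.induction_on with
    | zero => rw [map_zero, smul_zero]
    | add z₁ z₂ h₁ h₂ => rw [map_add, h₁, h₂, smul_add]
    | tmul h m =>
      rw [LinearMap.lTensor_tmul, LinearMap.smul_apply, LinearMap.id_apply,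
        TensorProduct.tmul_smul]
  apply hinj
  rw [hz z, hrz, map_zero]

theorem nzsdTP (n : ℕ) : NoZeroSMulDivisors R (TP H n) := by
  induction n with
  | zero =>
    constructor
    intro r v hrv
    by_cases hr : r = 0
    · exact Or.inl hr
    right
    have := congrArg (PiTensorProduct.isEmptyEquiv (Fin 0)) hrv
    rw [map_smul, map_zero] at this
    rcases smul_eq_zero.mp this with h | h
    · exact absurd h hr
    · exact (map_eq_zero_iff _ (PiTensorProduct.isEmptyEquiv (Fin 0)).injective).mp h
  | succ n ih =>
    haveI := ih
    haveI := nzsd_tensor H (TP H n)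
    set E : TP H (n + 1) ≃ₗ[R] H ⊗[R] TP H n :=
      ((PiTensorProduct.reindex R (fun _ : Fin 1 ⊕ Fin n => H)
        (finSumFinEquiv.trans (finCongr (Nat.add_comm 1 n)))).symm.trans
        ((PiTensorProduct.tmulEquiv (ι := Fin 1) (ι₂ := Fin n) R H).symm.trans
          (TensorProduct.congr (PiTensorProduct.subsingletonEquiv (0 : Fin 1))
            (LinearEquiv.refl R (TP H n))))) with hE
    constructor
    intro r v hrv
    by_cases hr : r = 0
    · exact Or.inl hr
    right
    have h1 := congrArg E hrv
    rw [map_smul, map_zero] at h1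
    rcases smul_eq_zero.mp h1 with h | h
    · exact absurd h hr
    · exact E.injective (by rw [h, map_zero])


/-! ### the case `n = 1` -/

lemma subsingletonEquiv_symm_apply (c : H) :
    (PiTensorProduct.subsingletonEquiv (0 : Fin 1) :
      (⨂[R] (_ : Fin 1), H) ≃ₗ[R] H).symm c = PiTensorProduct.tprod R (fun _ : Fin 1 => c) := by
  rw [LinearEquiv.symm_apply_eq, subsingletonEquiv_apply_tprod]

lemma Delta1 (a : H) : DeltaIter H 1 a = PiTensorProduct.tprod R (fun _ : Fin 1 => a) := by
  rw [Delta_succ]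
  have hsymm : ∀ r : R, (PiTensorProduct.isEmptyEquiv (ι := Fin 0) (s := fun _ => H)).symm r
      = r • PiTensorProduct.tprod R (fun i : Fin 0 => (isEmptyElim i : H)) := fun r => rfl
  have h1 : ∀ u : H ⊗[R] H, step H 0 (LinearMap.lTensor H (DeltaIter H 0) u) =
      (PiTensorProduct.subsingletonEquiv (0 : Fin 1) :
        (⨂[R] (_ : Fin 1), H) ≃ₗ[R] H).symm
        ((TensorProduct.rid R H)
          (LinearMap.lTensor H (Coalgebra.counit : H →ₗ[R] R) u)) := by
    intro u
    induction u using TensorProduct.induction_on with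
    | zero => simp only [map_zero]
    | add u₁ u₂ h₁ h₂ => simp only [map_add, h₁, h₂]
    | tmul c d =>
      have hD : DeltaIter H 0 d = (Coalgebra.counit (R := R) d) •
          PiTensorProduct.tprod R (fun i : Fin 0 => (isEmptyElim i : H)) := hsymm _
      rw [LinearMap.lTensor_tmul, hD, TensorProduct.tmul_smul, map_smul,
        step_tmul, LinearMap.lTensor_tmul, TensorProduct.rid_tmul, map_smul,
        subsingletonEquiv_symm_apply]
      refine congrArg (fun w => (Coalgebra.counit (R := R) d) • w)
        (congrArg ⇑(PiTensorProduct.tprod R (s := fun _ => H)) (funext fun j => ?_))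
      have : j = 0 := Fin.eq_zero j
      subst this
      rw [Fin.cons_zero]
  rw [h1]
  have h2 : (LinearMap.lTensor H (Coalgebra.counit : H →ₗ[R] R))
      ((Coalgebra.comul : H →ₗ[R] H ⊗[R] H) a) = a ⊗ₜ[R] (1 : R) :=
    Coalgebra.lTensor_counit_comul a
  rw [h2, TensorProduct.rid_tmul, one_smul, subsingletonEquiv_symm_apply]

lemma deltaN_one_apply (x : H) :
    deltaN H 1 x = PiTensorProduct.tprod R (fun _ : Fin 1 => pr H x) := by
  rw [deltaN_eq, Delta1, mapPr, map_tprod]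

lemma theta_mem (C : Subalgebra R H) {v : TP H 1}
    (hv : v ∈ tgrp H (fun i : Fin 1 => if i = Fin.last 0 then C.toSubmodule else ⊤)) :
    (PiTensorProduct.subsingletonEquiv (0 : Fin 1) :
      (⨂[R] (_ : Fin 1), H) ≃ₗ[R] H) v ∈ C := by
  induction hv using AddSubgroup.closure_induction with
  | mem z hz =>
    obtain ⟨f, hf, rfl⟩ := hz
    rw [subsingletonEquiv_apply_tprod]
    have h0 := hf 0
    have hlast : (0 : Fin 1) = Fin.last 0 := rfl
    rw [hlast] at h0 ⊢
    simp only [if_pos rfl] at h0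
    exact h0
  | zero => rw [map_zero]; exact C.zero_mem
  | add a b _ _ ha hb => rw [map_add]; exact C.add_mem ha hb
  | neg a _ ha => rw [map_neg]; exact C.neg_mem ha

lemma exists_x' (C : Subalgebra R H) {x : H} (hx : x ∈ Lsh H C.toSubmodule) :
    ∃ x' : H, x' ∈ C ∧ pr H x = (q - 1) • x' := by
  obtain ⟨y, hy, hxy⟩ := hx.2 0
  refine ⟨(PiTensorProduct.subsingletonEquiv (0 : Fin 1) :
    (⨂[R] (_ : Fin 1), H) ≃ₗ[R] H) y, theta_mem H C hy, ?_⟩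
  · have h1 : deltaN H 1 x = (q - 1) • y := by
      rw [hxy, pow_one]
    rw [deltaN_one_apply] at h1
    have h2 := congrArg (PiTensorProduct.subsingletonEquiv (0 : Fin 1) :
      (⨂[R] (_ : Fin 1), H) ≃ₗ[R] H) h1
    rw [subsingletonEquiv_apply_tprod, map_smul] at h2
    exact h2

/-! ### the main theorem -/

/-- For all `x, y ∈ C_q^Lsh` the commutator lies in `(q−1)·C_q^Lsh`. -/
theorem Lsh_proper (C : Subalgebra R H)
    (hC : ∀ c ∈ C, Coalgebra.comul (R := R) c ∈ tsub H ⊤ C.toSubmodule) :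
    ∀ x ∈ Lsh H C.toSubmodule, ∀ y ∈ Lsh H C.toSubmodule,
      ∃ z ∈ Lsh H C.toSubmodule, x * y - y * x = (q - 1) • z := by
  intro x hx y hy
  obtain ⟨x', hx'C, hx'⟩ := exists_x' H C hx
  have hyC : y ∈ C := hy.1
  have hcomm : x * y - y * x = (q - 1) • (x' * y - y * x') := by
    rw [smul_sub, ← smul_mul_assoc, ← mul_smul_comm, ← hx', pr_apply, sub_mul, mul_sub,
      smul_mul_assoc, one_mul, mul_smul_comm, mul_one]
    abel
  refine ⟨x' * y - y * x', ⟨?_, ?_⟩, hcomm⟩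
  · exact C.sub_mem (C.mul_mem hx'C hyC) (C.mul_mem hyC hx'C)
  · intro n
    set m := n + 1 with hm
    -- the per-pair estimates
    have hterm : ∀ S T : Finset (Fin m), ∃ w ∈ W H C (Finset.univ : Finset (Fin m)),
        mapPr H m (mapP H S (DeltaIter H m x) * mapP H T (DeltaIter H m y)) -
          mapPr H m (mapP H T (DeltaIter H m y) * mapP H S (DeltaIter H m x)) =
          ((q - 1) ^ (m + 1)) • w := by
      intro S T
      obtain ⟨wS, hwS, hS⟩ := Qlem H C hx m S
      obtain ⟨wT, hwT, hT⟩ := Qlem H C hy m T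
      by_cases hUT : S ∪ T = Finset.univ
      · by_cases hI : (S ∩ T).Nonempty
        · refine ⟨((q - 1) ^ (S.card + T.card - (m + 1))) •
            (mapPr H m (wS * wT) - mapPr H m (wT * wS)), ?_, ?_⟩
          · exact Submodule.smul_mem _ _ (sub_mem (mapPr_W H C (W_mul H C hwS hwT))
              (mapPr_W H C (W_mul H C hwT hwS)))
          · have hcard : S.card + T.card = m + (S ∩ T).card := by
              rw [← Finset.card_union_add_card_inter, hUT, Finset.card_univ, Fintype.card_fin]
            have hge : m + 1 ≤ S.card + T.card := by
              have := Finset.card_pos.mpr hI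
              omega
            rw [hS, hT, smul_mul_smul_comm, smul_mul_smul_comm, ← pow_add, ← pow_add,
              Nat.add_comm T.card S.card, map_smul, map_smul, smul_smul, ← pow_add, smul_sub]
            congr 3 <;> omega
        · have hdisj : Disjoint S T := by
            rw [Finset.disjoint_iff_inter_eq_empty]
            exact Finset.not_nonempty_iff_eq_empty.mp hI
          refine ⟨0, zero_mem _, ?_⟩
          have huS : mapP H S (DeltaIter H m x) ∈ W H C S := by
            rw [hS]; exact Submodule.smul_mem _ _ hwS
          have hvT : mapP H T (DeltaIter H m y) ∈ W H C T := by
            rw [hT]; exact Submodule.smul_mem _ _ hwT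
          rw [W_comm H C hdisj huS hvT, sub_self, smul_zero]
      · refine ⟨0, zero_mem _, ?_⟩
        have huS : mapP H S (DeltaIter H m x) ∈ W H C S := by
          rw [hS]; exact Submodule.smul_mem _ _ hwS
        have hvT : mapP H T (DeltaIter H m y) ∈ W H C T := by
          rw [hT]; exact Submodule.smul_mem _ _ hwT
        rw [mapPr_W_zero H C (W_mul H C huS hvT) hUT,
          mapPr_W_zero H C (W_mul H C hvT huS) (by rw [Finset.union_comm]; exact hUT),
          sub_self, smul_zero]
    choose w hwmem hweq using hterm
    -- the expansion of `δ_m` of the commutator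
    have e1 : deltaN H m (x * y - y * x) =
        ∑ S : Finset (Fin m), ∑ T : Finset (Fin m),
          (mapPr H m (mapP H S (DeltaIter H m x) * mapP H T (DeltaIter H m y)) -
            mapPr H m (mapP H T (DeltaIter H m y) * mapP H S (DeltaIter H m x))) := by
      rw [deltaN_eq, map_sub, Delta_mul, Delta_mul]
      conv_lhs => rw [← decomp H (DeltaIter H m x), ← decomp H (DeltaIter H m y)]
      rw [Finset.sum_mul_sum, Finset.sum_mul_sum]
      simp only [map_sub, map_sum]
      have hswap : (∑ T : Finset (Fin m), ∑ S : Finset (Fin m),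
          mapPr H m (mapP H T (DeltaIter H m y) * mapP H S (DeltaIter H m x))) =
          ∑ S : Finset (Fin m), ∑ T : Finset (Fin m),
            mapPr H m (mapP H T (DeltaIter H m y) * mapP H S (DeltaIter H m x)) :=
        Finset.sum_comm
      rw [hswap, ← Finset.sum_sub_distrib]
      refine Finset.sum_congr rfl fun S _ => ?_
      rw [← Finset.sum_sub_distrib]
    have e2 : deltaN H m (x * y - y * x) =
        ((q - 1) ^ (m + 1)) • ∑ S : Finset (Fin m), ∑ T : Finset (Fin m), w S T := by
      rw [e1]
      rw [Finset.smul_sum]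
      refine Finset.sum_congr rfl fun S _ => ?_
      rw [Finset.smul_sum]
      exact Finset.sum_congr rfl fun T _ => hweq S T
    have hwsum : (∑ S : Finset (Fin m), ∑ T : Finset (Fin m), w S T) ∈
        W H C (Finset.univ : Finset (Fin m)) :=
      Submodule.sum_mem _ fun S _ => Submodule.sum_mem _ fun T _ => hwmem S T
    refine ⟨∑ S : Finset (Fin m), ∑ T : Finset (Fin m), w S T,
      W_univ_le_tgrp H C hwsum, ?_⟩
    -- cancel one factor of `q - 1`
    haveI := nzsdTP H m
    have hcancel : (q - 1) • deltaN H m (x' * y - y * x') =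
        (q - 1) • (((q - 1) ^ m) • ∑ S : Finset (Fin m), ∑ T : Finset (Fin m), w S T) := by
      rw [← map_smul, ← hcomm, e2, smul_smul, ← pow_succ']
    exact smul_right_injective (TP H m) q_sub_one_ne_zero hcancel

end GQDP
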